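/- Let q ≥ 0, L ≥ 1 and n be integers with n ≥ q+2, and let x > 0 be a real number with n·x ≠ L and g_j^{(n,L)}(x) ≠ 0 for all 0 ≤ j ≤ q+1. Then ∑_{j=0}^{q} (Γ(n+L+1)/(Γ(j+L+2)·Γ(n−j−1))) · x^j/(g_{j+1}^{(n,L)}(x)·g_j^{(n,L)}(x)) = (Γ(n+1)·Γ(L+1)/Γ(n+L+1)) · ((n−1)·x − (L+1))/(x·(x − L/n)) + (−(n−q−2)·x + L+q+2)/(x·(x − L/n)·g_{q+1}^{(n,L)}(x)). -/

import Mathlib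

open Finset

noncomputable section

/-- `g_m^{(n,L)}(x)`. -/
def gP (n L m : ℕ) (x : ℝ) : ℝ :=
  ((x - (L : ℝ) / n) / x) *
      ∑ k ∈ Finset.range (m + 1), ((m : ℝ) + 1 - k) * (Nat.choose (L + n) (L + k) : ℝ) * x ^ k
    + ((L : ℝ) * ((m : ℝ) + 1) / ((n : ℝ) * x)) * (Nat.choose (L + n) L : ℝ)

namespace PhiAux

def c (n L k : ℕ) : ℝ := (Nat.choose (L + n) (L + k) : ℝ)

def S (n L : ℕ) (x : ℝ) (m : ℕ) : ℝ :=
  ∑ k ∈ Finset.range (m + 1), ((m : ℝ) + 1 - k) * c n L k * x ^ k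

def T (n L : ℕ) (x : ℝ) (m : ℕ) : ℝ :=
  ∑ k ∈ Finset.range (m + 1), c n L k * x ^ k

def A (n L : ℕ) (x : ℝ) (j : ℕ) : ℝ := -(((n : ℝ) - j - 1)) * x + L + j + 1

lemma absorb (n L k : ℕ) (hk : k + 1 ≤ n) :
    ((L : ℝ) + k + 1) * c n L (k + 1) = ((n : ℝ) - k) * c n L k := by
  have h := Nat.choose_succ_right_eq (L + n) (L + k)
  have h2 : L + n - (L + k) = n - k := by omega
  rw [h2] at h
  have h3 : ((Nat.choose (L + n) (L + k + 1) * (L + k + 1) : ℕ) : ℝ)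
      = ((Nat.choose (L + n) (L + k) * (n - k) : ℕ) : ℝ) := by exact_mod_cast h
  have hkn : k ≤ n := by omega
  push_cast [Nat.cast_sub hkn] at h3
  unfold c
  have : L + (k + 1) = L + k + 1 := by omega
  rw [this]
  push_cast
  linarith

lemma S_succ (n L : ℕ) (x : ℝ) (m : ℕ) :
    S n L x (m + 1) = S n L x m + T n L x (m + 1) := by
  unfold S T
  have h1 : ∀ k ∈ Finset.range (m + 2),
      (((m + 1 : ℕ) : ℝ) + 1 - k) * c n L k * x ^ k
        = ((m : ℝ) + 1 - k) * c n L k * x ^ k + c n L k * x ^ k := by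
    intro k _; push_cast; ring
  rw [show m + 1 + 1 = m + 2 from rfl, Finset.sum_congr rfl h1, Finset.sum_add_distrib,
    Finset.sum_range_succ (fun k => ((m : ℝ) + 1 - k) * c n L k * x ^ k)]
  push_cast
  ring

lemma Pkey (n L : ℕ) (x : ℝ) : ∀ j, j + 2 ≤ n →
    (x + 1) * S n L x j - A n L x j * T n L x (j + 1) + L * c n L 0
      = ((n : ℝ) - j - 1) * c n L (j + 1) * x ^ (j + 2) := by
  intro j
  induction j with
  | zero =>
    intro hj
    have habs := absorb n L 0 (by omega)
    simp only [S, T, A, Finset.sum_range_succ, Finset.sum_range_one]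
    push_cast at habs ⊢
    linear_combination -x * habs
  | succ j ih =>
    intro hj
    have IH := ih (by omega)
    have hS := S_succ n L x j
    have hT : T n L x (j + 2) = T n L x (j + 1) + c n L (j + 2) * x ^ (j + 2) := by
      unfold T; rw [Finset.sum_range_succ]
    have hA : A n L x (j + 1) = A n L x j + x + 1 := by unfold A; push_cast; ring
    have habs := absorb n L (j + 1) (by omega)
    have e1 : (j : ℕ) + 1 + 1 = j + 2 := by omega
    rw [e1] at *
    rw [hS, hT, hA]
    simp only [A] at IH ⊢
    push_cast at habs IH ⊢
    linear_combination IH - x ^ (j + 2) * habs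

lemma gx (n L m : ℕ) (x : ℝ) (hx : x ≠ 0) (hn : (n : ℝ) ≠ 0) :
    gP n L m x * ((n : ℝ) * x) = ((n : ℝ) * x - L) * S n L x m + L * ((m : ℝ) + 1) * c n L 0 := by
  unfold gP S c
  simp only [Nat.add_zero]
  have e1 : ((x - (L : ℝ) / n) / x) * ((n : ℝ) * x) = (n : ℝ) * x - (L : ℝ) := by
    field_simp
  have e2 : ((L : ℝ) * ((m : ℝ) + 1) / ((n : ℝ) * x)) * ((n : ℝ) * x) = (L : ℝ) * ((m : ℝ) + 1) := by
    field_simp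
  linear_combination
    (∑ k ∈ Finset.range (m + 1), ((m : ℝ) + 1 - k) * (Nat.choose (L + n) (L + k) : ℝ) * x ^ k) * e1
      + (Nat.choose (L + n) L : ℝ) * e2

lemma key (n L j : ℕ) (x : ℝ) (hx : x ≠ 0) (hn : (n : ℝ) ≠ 0) (hj : j + 2 ≤ n) :
    (n : ℝ) * x * (A n L x (j + 1) * gP n L j x - A n L x j * gP n L (j + 1) x)
      = ((n : ℝ) - j - 1) * c n L (j + 1) * x ^ (j + 2) * ((n : ℝ) * x - L) := by
  have h1 := gx n L j x hx hn
  have h2 := gx n L (j + 1) x hx hn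
  have hS := S_succ n L x j
  have hP := Pkey n L x j hj
  rw [hS] at h2
  simp only [A] at *
  push_cast at h1 h2 ⊢
  linear_combination (-(((n : ℝ) - j - 1)) * x + L + j + 1 + x + 1) * h1
    - (-(((n : ℝ) - j - 1)) * x + L + j + 1) * h2
    + ((n : ℝ) * x - L) * hP

lemma g0 (n L : ℕ) (x : ℝ) (hx : x ≠ 0) (hn : (n : ℝ) ≠ 0) : gP n L 0 x = c n L 0 := by
  have h := gx n L 0 x hx hn
  have hS : S n L x 0 = c n L 0 := by simp [S]
  rw [hS] at h
  have h2 : gP n L 0 x * ((n : ℝ) * x) = c n L 0 * ((n : ℝ) * x) := by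
    push_cast at h; linear_combination h
  exact mul_right_cancel₀ (mul_ne_zero hn hx) h2

lemma gammaRatio (n L j : ℕ) (hj : j + 2 ≤ n) :
    Real.Gamma ((n : ℝ) + L + 1) /
        (Real.Gamma ((j : ℝ) + L + 2) * Real.Gamma ((n : ℝ) - j - 1))
      = ((n : ℝ) - j - 1) * c n L (j + 1) := by
  obtain ⟨m, rfl⟩ : ∃ m, n = j + 2 + m := ⟨n - (j + 2), by omega⟩
  have e1 : ((j + 2 + m : ℕ) : ℝ) + L + 1 = ((j + 2 + m + L : ℕ) : ℝ) + 1 := by push_cast; ring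
  have e2 : ((j : ℕ) : ℝ) + L + 2 = ((j + L + 1 : ℕ) : ℝ) + 1 := by push_cast; ring
  have e3 : ((j + 2 + m : ℕ) : ℝ) - j - 1 = ((m : ℕ) : ℝ) + 1 := by push_cast; ring
  rw [e1, e2, e3, Real.Gamma_nat_eq_factorial, Real.Gamma_nat_eq_factorial,
    Real.Gamma_nat_eq_factorial]
  unfold c
  rw [show L + (j + 1) = j + L + 1 from by omega,
    show L + (j + 2 + m) = j + 2 + m + L from by omega]
  have hc := Nat.choose_mul_factorial_mul_factorial
    (n := j + 2 + m + L) (k := j + L + 1) (by omega)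
  rw [show j + 2 + m + L - (j + L + 1) = m + 1 from by omega] at hc
  have hcR : ((Nat.choose (j + 2 + m + L) (j + L + 1) : ℕ) : ℝ)
        * ((j + L + 1).factorial : ℝ) * ((m : ℝ) + 1) * ((m.factorial : ℕ) : ℝ)
      = (((j + 2 + m + L).factorial : ℕ) : ℝ) := by
    have : (((m+1).factorial : ℕ) : ℝ) = ((m : ℝ) + 1) * ((m.factorial : ℕ) : ℝ) := by
      rw [Nat.factorial_succ]; push_cast; ring
    rw [show ((Nat.choose (j + 2 + m + L) (j + L + 1) : ℕ) : ℝ)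
        * ((j + L + 1).factorial : ℝ) * ((m : ℝ) + 1) * ((m.factorial : ℕ) : ℝ)
      = ((Nat.choose (j + 2 + m + L) (j + L + 1) : ℕ) : ℝ)
        * ((j + L + 1).factorial : ℝ) * (((m : ℝ) + 1) * ((m.factorial : ℕ) : ℝ)) from by ring,
      ← this]
    exact_mod_cast hc
  have hf1 : ((j + L + 1).factorial : ℝ) ≠ 0 := by positivity
  have hf2 : ((m.factorial : ℕ) : ℝ) ≠ 0 := by positivity
  rw [div_eq_iff (by positivity)]
  push_cast at hcR ⊢
  linear_combination -hcR

lemma step (n L j : ℕ) (x : ℝ) (hx : x ≠ 0) (hn : (n : ℝ) ≠ 0)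
    (hnx : (n : ℝ) * x - L ≠ 0)
    (hj : j + 2 ≤ n) (h0 : gP n L j x ≠ 0) (h1 : gP n L (j + 1) x ≠ 0) :
    ((n : ℝ) - j - 1) * c n L (j + 1) * (x ^ j / (gP n L (j + 1) x * gP n L j x))
      = A n L x (j + 1) / (x * (x - (L : ℝ) / n) * gP n L (j + 1) x)
        - A n L x j / (x * (x - (L : ℝ) / n) * gP n L j x) := by
  have hk := key n L j x hx hn hj
  have hl : x - (L : ℝ) / n = ((n : ℝ) * x - L) / n := by field_simp
  rw [hl]
  field_simp
  exact mul_right_cancel₀ hx (by linear_combination -hk)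

end PhiAux

theorem Phi_closed_form (q L n : ℕ) (hL : 1 ≤ L) (hn : q + 2 ≤ n)
    (x : ℝ) (hx : 0 < x) (hxL : (n : ℝ) * x ≠ L)
    (hg : ∀ j ≤ q + 1, gP n L j x ≠ 0) :
    (∑ j ∈ Finset.range (q + 1),
        Real.Gamma ((n : ℝ) + L + 1) /
            (Real.Gamma ((j : ℝ) + L + 2) * Real.Gamma ((n : ℝ) - j - 1)) *
          (x ^ j / (gP n L (j + 1) x * gP n L j x)))
      = Real.Gamma ((n : ℝ) + 1) * Real.Gamma ((L : ℝ) + 1) / Real.Gamma ((n : ℝ) + L + 1) *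
          ((((n : ℝ) - 1) * x - ((L : ℝ) + 1)) / (x * (x - (L : ℝ) / n)))
        + (-(((n : ℝ) - q - 2)) * x + (L : ℝ) + q + 2) /
            (x * (x - (L : ℝ) / n) * gP n L (q + 1) x) := by
  have hx0 : x ≠ 0 := ne_of_gt hx
  have hn0 : (n : ℝ) ≠ 0 := Nat.cast_ne_zero.mpr (by omega)
  have hnx : (n : ℝ) * x - L ≠ 0 := fun h => hxL (by linarith)
  have hxl : x - (L : ℝ) / n ≠ 0 := by
    rw [show x - (L : ℝ) / n = ((n : ℝ) * x - L) / n from by field_simp]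
    exact div_ne_zero hnx hn0
  have hsum : ∀ j ∈ Finset.range (q + 1),
      Real.Gamma ((n : ℝ) + L + 1) /
          (Real.Gamma ((j : ℝ) + L + 2) * Real.Gamma ((n : ℝ) - j - 1)) *
        (x ^ j / (gP n L (j + 1) x * gP n L j x))
        = PhiAux.A n L x (j + 1) / (x * (x - (L : ℝ) / n) * gP n L (j + 1) x)
          - PhiAux.A n L x j / (x * (x - (L : ℝ) / n) * gP n L j x) := by
    intro j hj
    rw [Finset.mem_range] at hj
    rw [PhiAux.gammaRatio n L j (by omega)]
    exact PhiAux.step n L j x hx0 hn0 hnx (by omega) (hg j (by omega)) (hg (j + 1) (by omega))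
  rw [Finset.sum_congr rfl hsum,
    Finset.sum_range_sub (fun j => PhiAux.A n L x j / (x * (x - (L : ℝ) / n) * gP n L j x))]
  rw [PhiAux.g0 n L x hx0 hn0]
  rw [show (n : ℝ) + (L : ℝ) + 1 = ((L + n : ℕ) : ℝ) + 1 from by push_cast; ring,
    Real.Gamma_nat_eq_factorial, Real.Gamma_nat_eq_factorial, Real.Gamma_nat_eq_factorial]
  have hch := Nat.choose_mul_factorial_mul_factorial (n := L + n) (k := L) (by omega)
  rw [show L + n - L = n from by omega] at hch
  have hchR : ((Nat.choose (L + n) L : ℕ) : ℝ) * (L.factorial : ℝ) * (n.factorial : ℝ)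
      = ((L + n).factorial : ℝ) := by exact_mod_cast hch
  have hc0 : PhiAux.c n L 0 = ((Nat.choose (L + n) L : ℕ) : ℝ) := by
    unfold PhiAux.c; norm_num
  have hA1 : PhiAux.A n L x (q + 1) = -(((n : ℝ) - q - 2)) * x + (L : ℝ) + q + 2 := by
    unfold PhiAux.A; push_cast; ring
  have hA0 : PhiAux.A n L x 0 = -((((n : ℝ) - 1) * x - ((L : ℝ) + 1))) := by
    unfold PhiAux.A; push_cast; ring
  rw [hc0, hA1, hA0]
  have hC0 : ((Nat.choose (L + n) L : ℕ) : ℝ) ≠ 0 := by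
    have := Nat.choose_pos (show L ≤ L + n from by omega)
    positivity
  have hfact : ((L + n).factorial : ℝ) ≠ 0 := by positivity
  have hgq : gP n L (q + 1) x ≠ 0 := hg (q + 1) le_rfl
  have hmain : (n.factorial : ℝ) * (L.factorial : ℝ) / ((L + n).factorial : ℝ) *
        ((((n : ℝ) - 1) * x - ((L : ℝ) + 1)) / (x * (x - (L : ℝ) / n)))
      = -(-((((n : ℝ) - 1) * x - ((L : ℝ) + 1))) /
          (x * (x - (L : ℝ) / n) * ((Nat.choose (L + n) L : ℕ) : ℝ))) := by
    rw [show x - (L : ℝ) / n = ((n : ℝ) * x - L) / n from by field_simp]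
    field_simp
    linear_combination ((((n : ℝ) - 1) * x - ((L : ℝ) + 1))) * hchR
  rw [hmain]
  ring
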